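/- Let S ⊆ [1..U] with |S| = n, and partition the sorted elements x₁ < x₂ < … < x_n of S into ⌈n/b⌉ consecutive blocks of size b (last block possibly smaller). For each block let y_i be the longest common binary prefix (from the most significant bit, with all elements written as ⌈log₂ U⌉-bit strings) of the elements in the block. Then y_i equals the longest common prefix of the first and last elements of the block, and the y_i are pairwise distinct. -/
import Mathlib


/-- Longest common prefix of two lists. -/
def lcpList {α : Type*} [DecidableEq α] : List α → List α → List α
  | a :: as, b :: bs => if a = b then a :: lcpList as bs else []
  | _, _ => []

theorem lcp_nil_left {α : Type*} [DecidableEq α] (l : List α) : lcpList [] l = [] := by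
  cases l <;> rfl

theorem lcp_nil_right {α : Type*} [DecidableEq α] (l : List α) : lcpList l [] = [] := by
  cases l <;> rfl

theorem lcp_cons {α : Type*} [DecidableEq α] (a b : α) (as bs : List α) :
    lcpList (a :: as) (b :: bs) = if a = b then a :: lcpList as bs else [] := rfl

theorem lcp_self {α : Type*} [DecidableEq α] : ∀ l : List α, lcpList l l = l
  | [] => rfl
  | a :: as => by simp [lcp_cons, lcp_self as]

theorem prefix_lcp {α : Type*} [DecidableEq α] :
    ∀ p a b : List α, p <+: a → p <+: b → p <+: lcpList a b
  | [], _, _, _, _ => List.nil_prefix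
  | q :: ps, a, b, ha, hb => by
    obtain ⟨ta, rfl⟩ := ha
    obtain ⟨tb, rfl⟩ := hb
    simp only [List.cons_append, lcp_cons, if_pos rfl]
    obtain ⟨t, ht⟩ := prefix_lcp ps _ _ ⟨ta, rfl⟩ ⟨tb, rfl⟩
    exact ⟨t, by simp [← ht]⟩

theorem bool_lt_iff (a b : Bool) : a < b ↔ a = false ∧ b = true := by
  cases a <;> cases b <;> simp [Bool.lt_iff]

theorem lcp_mid : ∀ u v w : List Bool, (u < v ∨ u = v) → (v < w ∨ v = w) →
    lcpList u w <+: v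
  | [], v, w, _, _ => by rw [lcp_nil_left]; exact List.nil_prefix
  | a :: as, v, [], _, _ => by rw [lcp_nil_right]; exact List.nil_prefix
  | a :: as, v, c :: cs, h1, h2 => by
    by_cases hac : a = c
    · subst hac
      -- show v = a :: vs with as ≤ vs ≤ cs
      obtain ⟨vs, rfl, hv1, hv2⟩ :
          ∃ vs, v = a :: vs ∧ (as < vs ∨ as = vs) ∧ (vs < cs ∨ vs = cs) := by
        rcases h1 with h1 | rfl
        · cases h1 with
          | cons h => rcases h2 with h2 | h2
                      · cases h2 with
                        | cons h' => exact ⟨_, rfl, Or.inl h, Or.inl h'⟩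
                        | rel h' => exact absurd h' (lt_irrefl _)
                      · cases h2; exact ⟨_, rfl, Or.inl h, Or.inr rfl⟩
          | rel h =>
            exfalso
            rcases h2 with h2 | h2
            · cases h2 with
              | cons h' => exact absurd h (lt_irrefl _)
              | rel h' => exact absurd h' (lt_asymm h)
            · rw [List.cons.injEq] at h2
              exact absurd (h2.1 ▸ h) (lt_irrefl _)
        · rcases h2 with h2 | h2
          · cases h2 with
            | cons h' => exact ⟨_, rfl, Or.inr rfl, Or.inl h'⟩
            | rel h' => exact absurd h' (lt_irrefl _)
          · rw [List.cons.injEq] at h2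
            exact ⟨_, rfl, Or.inr rfl, Or.inr h2.2⟩
      simp only [lcp_cons, if_pos rfl]
      obtain ⟨t, ht⟩ := lcp_mid as vs cs hv1 hv2
      exact ⟨t, by simp [← ht]⟩
    · simp only [lcp_cons, if_neg hac]
      exact List.nil_prefix

theorem lcp_split : ∀ u w : List Bool, u < w → u.length = w.length →
    ∃ s t, u = lcpList u w ++ false :: s ∧ w = lcpList u w ++ true :: t
  | u, w, h, hl => by
    cases h with
    | nil => simp at hl
    | @cons a as bs h =>
      obtain ⟨s, t, hs, ht⟩ := lcp_split as bs h (by simpa using hl)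
      refine ⟨s, t, ?_, ?_⟩ <;> simp [lcp_cons] <;> [exact hs; exact ht]
    | @rel a as b bs h =>
      rw [bool_lt_iff] at h
      obtain ⟨rfl, rfl⟩ := h
      exact ⟨as, bs, by simp [lcp_cons], by simp [lcp_cons]⟩

theorem not_true_lt_false : ∀ (l t s : List Bool), ¬ (l ++ true :: t < l ++ false :: s)
  | [], t, s, h => by
    cases h with
    | rel h' => rw [bool_lt_iff] at h'; simp at h'
  | a :: l, t, s, h => by
    cases h with
    | cons h' => exact not_true_lt_false l t s h'
    | rel h' => exact absurd h' (lt_irrefl _)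



/-- Let `S ⊆ [1..U]`, `|S| = n`, be given in sorted order as `w`-bit binary
strings (MSB first, `w = ⌈log₂ U⌉`, lexicographic order = numeric order),
partitioned into `⌈n/b⌉` consecutive blocks of size `b` (last block possibly
smaller).  For each block `i`, the longest common prefix `y i` of the first
and last elements of the block is the longest common prefix of all elements
of the block, and the `y i` are pairwise distinct. -/
theorem block_lcps_distinct (w n b : ℕ) (hb : 1 ≤ b) (hn : 1 ≤ n)
    (x : ℕ → List Bool)
    (hlen : ∀ j < n, (x j).length = w)
    (hmono : ∀ j k : ℕ, j < k → k < n → x j < x k) :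
    let nb := (n + b - 1) / b
    let first : ℕ → ℕ := fun i => i * b
    let last : ℕ → ℕ := fun i => min ((i + 1) * b) n - 1
    let y : ℕ → List Bool := fun i => lcpList (x (first i)) (x (last i))
    (∀ i < nb, (∀ j, first i ≤ j → j ≤ last i → y i <+: x j) ∧
        (∀ p : List Bool, (∀ j, first i ≤ j → j ≤ last i → p <+: x j) →
          p <+: y i)) ∧
    (∀ i i', i < nb → i' < nb → i ≠ i' → y i ≠ y i') := by
  intro nb first last y
  -- basic index facts
  have hmul : ∀ i, i < nb → (i + 1) * b ≤ n + b - 1 := by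
    intro i hi
    have : i + 1 ≤ (n + b - 1) / b := hi
    calc (i + 1) * b ≤ (n + b - 1) / b * b := Nat.mul_le_mul_right b this
    _ ≤ n + b - 1 := Nat.div_mul_le_self _ _
  have hfl : ∀ i, i < nb → first i ≤ last i := by
    intro i hi
    have h1 := hmul i hi
    simp only [first, last, add_one_mul] at *
    omega
  have hln : ∀ i, i < nb → last i < n := by
    intro i hi
    simp only [last]
    omega
  have hle : ∀ j k, j ≤ k → k < n → x j < x k ∨ x j = x k := by
    intro j k h hk
    rcases h.lt_or_eq with h' | rfl
    · exact Or.inl (hmono _ _ h' hk)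
    · exact Or.inr rfl
  have part1 : ∀ i < nb, (∀ j, first i ≤ j → j ≤ last i → y i <+: x j) ∧
      (∀ p : List Bool, (∀ j, first i ≤ j → j ≤ last i → p <+: x j) → p <+: y i) := by
    intro i hi
    constructor
    · intro j h1 h2
      exact lcp_mid _ _ _ (hle _ _ h1 (lt_of_le_of_lt h2 (hln i hi)))
        (hle _ _ h2 (hln i hi))
    · intro p hp
      exact prefix_lcp _ _ _ (hp _ le_rfl (hfl i hi)) (hp _ (hfl i hi) le_rfl)
  refine ⟨part1, ?_⟩
  have main : ∀ i i', i < nb → i' < nb → i < i' → y i ≠ y i' := by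
    intro i i' hi hi' hii' heq
    have hlast_lt : last i < first i' := by
      have h1 : (i + 1) * b ≤ i' * b := Nat.mul_le_mul_right b hii'
      simp only [first, last] at *
      have : 0 < (i + 1) * b := Nat.mul_pos (Nat.succ_pos i) hb
      omega
    have hfn : first i < n := lt_of_le_of_lt (hfl i hi) (hln i hi)
    have hfn' : first i' < n := lt_of_le_of_lt (hfl i' hi') (hln i' hi')
    have hv1u2 : x (last i) < x (first i') := hmono _ _ hlast_lt hfn'
    -- lengths
    have L1 : (x (first i)).length = w := hlen _ hfn
    have L2 : (x (last i)).length = w := hlen _ (hln i hi)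
    have L3 : (x (first i')).length = w := hlen _ hfn'
    have L4 : (x (last i')).length = w := hlen _ (hln i' hi')
    have hyi : y i = lcpList (x (first i)) (x (last i)) := rfl
    have hyi' : y i' = lcpList (x (first i')) (x (last i')) := rfl
    rcases (hfl i hi).lt_or_eq with h1 | h1
    · -- block i nontrivial
      obtain ⟨s1, t1, hu1, hv1⟩ := lcp_split _ _ (hmono _ _ h1 (hln i hi)) (by omega)
      rcases (hfl i' hi').lt_or_eq with h2 | h2
      · -- block i' nontrivial
        obtain ⟨s2, t2, hu2, hv2⟩ := lcp_split _ _ (hmono _ _ h2 (hln i' hi')) (by omega)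
        rw [hv1, hu2, ← hyi, ← hyi', ← heq] at hv1u2
        exact not_true_lt_false _ _ _ hv1u2
      · -- block i' singleton: y i' has length w, but y i is shorter
        have hy' : y i' = x (first i') := by
          simp only [y, h2, lcp_self]
        have hlen1 : (y i).length < w := by
          have := congrArg List.length hv1
          rw [← hyi] at this
          simp [L2] at this; omega
        rw [heq, hy'] at hlen1
        omega
    · -- block i singleton
      have hy : y i = x (first i) := by simp only [y, h1, lcp_self]
      rcases (hfl i' hi').lt_or_eq with h2 | h2
      · obtain ⟨s2, t2, hu2, hv2⟩ := lcp_split _ _ (hmono _ _ h2 (hln i' hi')) (by omega)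
        have hlen2 : (y i').length < w := by
          have := congrArg List.length hu2
          rw [← hyi'] at this
          simp [L3] at this; omega
        rw [← heq, hy] at hlen2
        omega
      · -- both singletons
        have hy' : y i' = x (first i') := by simp only [y, h2, lcp_self]
        have hlt : x (first i) < x (first i') :=
          hmono _ _ (lt_of_le_of_lt (le_of_eq h1) hlast_lt) hfn'
        rw [← hy, ← hy', heq] at hlt
        exact lt_irrefl _ hlt
  intro i i' hi hi' hne
  rcases hne.lt_or_gt with h | h
  · exact main i i' hi hi' h
  · exact fun he => main i' i hi' hi h he.symm
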